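/- Let d ≥ 1, p ≥ 1, and let f : ℝ^d → ℝ be continuously differentiable with compact support not containing the origin. Then for all 0 < α < d and 0 < β < d, the integral ∫_{ℝ^d} ∫_{ℝ^d} |f(x) − f(y)|^p |x−y|^{−d} |x|^{−α} |y|^{−β} dy dx is finite. -/

import Mathlib

open MeasureTheory Metric Set Filter
open scoped ENNReal NNReal

section Aux

variable {E : Type*} [NormedAddCommGroup E] [NormedSpace ℝ E] [MeasurableSpace E]
  [BorelSpace E] [FiniteDimensional ℝ E] [Nontrivial E] (μ : Measure E) [μ.IsAddHaarMeasure]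

/-- Finiteness of `∫_{B(0,r)} ‖z‖^s` for `s > -dim`. -/
lemma lint_ball_rpow_lt_top {s r : ℝ} (hs : -(Module.finrank ℝ E : ℝ) < s) (hr : 0 < r) :
    (∫⁻ z in Metric.ball (0 : E) r, ENNReal.ofReal (‖z‖ ^ s) ∂μ) < ⊤ := by
  rcases le_or_gt 0 s with hs0 | hs0
  · calc ∫⁻ z in ball (0 : E) r, ENNReal.ofReal (‖z‖ ^ s) ∂μ
        ≤ ∫⁻ _ in ball (0 : E) r, ENNReal.ofReal (r ^ s) ∂μ := by
          refine setLIntegral_mono measurable_const fun z hz => ?_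
          exact ENNReal.ofReal_le_ofReal
            (Real.rpow_le_rpow (norm_nonneg _) (mem_ball_zero_iff.mp hz).le hs0)
      _ = ENNReal.ofReal (r ^ s) * μ (ball 0 r) := setLIntegral_const _ _
      _ < ⊤ := ENNReal.mul_lt_top ENNReal.ofReal_lt_top measure_ball_lt_top
  · set n : ℕ := Module.finrank ℝ E with hn
    set a : ℕ → ℝ := fun k => r * (1/2 : ℝ) ^ k with ha
    have ha_pos : ∀ k, 0 < a k := fun k => by positivity
    have hcover : ball (0 : E) r ⊆ {(0 : E)} ∪ ⋃ k, (ball (0 : E) (a k) \ ball 0 (a (k+1))) := by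
      intro z hz
      rcases eq_or_ne z 0 with rfl | hz0
      · exact Or.inl rfl
      right
      have hz0' : 0 < ‖z‖ := norm_pos_iff.mpr hz0
      have hzr : ‖z‖ < r := mem_ball_zero_iff.mp hz
      have hex : ∃ k, a (k+1) ≤ ‖z‖ := by
        obtain ⟨k, hk⟩ := exists_pow_lt_of_lt_one (div_pos hz0' hr) (by norm_num : (1:ℝ)/2 < 1)
        refine ⟨k, ?_⟩
        have h1 : a (k+1) ≤ a k := by
          have : (1/2:ℝ) ^ (k+1) ≤ (1/2:ℝ) ^ k :=
            pow_le_pow_of_le_one (by norm_num) (by norm_num) (Nat.le_succ k)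
          exact mul_le_mul_of_nonneg_left this hr.le
        have h2 : a k < ‖z‖ := by
          have := mul_lt_mul_of_pos_left hk hr
          rwa [mul_div_cancel₀ _ hr.ne'] at this
        linarith
      refine mem_iUnion.2 ⟨Nat.find hex, ?_, ?_⟩
      · rw [mem_ball_zero_iff]
        rcases Nat.eq_zero_or_pos (Nat.find hex) with h | h
        · rw [h]; simpa [a] using hzr
        · obtain ⟨j, hj⟩ := Nat.exists_eq_succ_of_ne_zero h.ne'
          have hmin := Nat.find_min hex (show j < Nat.find hex by omega)
          push_neg at hmin
          rw [hj]
          exact hmin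
      · rw [mem_ball_zero_iff]
        push_neg
        exact Nat.find_spec hex
    have hterm : ∀ k, (∫⁻ z in ball (0 : E) (a k) \ ball 0 (a (k+1)),
        ENNReal.ofReal (‖z‖ ^ s) ∂μ)
        ≤ ENNReal.ofReal (a (k+1) ^ s * a k ^ n) * μ (ball (0 : E) 1) := by
      intro k
      calc ∫⁻ z in ball (0 : E) (a k) \ ball 0 (a (k+1)), ENNReal.ofReal (‖z‖ ^ s) ∂μ
          ≤ ∫⁻ _ in ball (0 : E) (a k) \ ball 0 (a (k+1)),
              ENNReal.ofReal (a (k+1) ^ s) ∂μ := by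
            refine setLIntegral_mono measurable_const fun z hz => ?_
            refine ENNReal.ofReal_le_ofReal ?_
            have hz2 : a (k+1) ≤ ‖z‖ := by
              have := hz.2; rw [mem_ball_zero_iff] at this; linarith [not_lt.mp this]
            exact Real.rpow_le_rpow_of_nonpos (ha_pos (k+1)) hz2 hs0.le
        _ = ENNReal.ofReal (a (k+1) ^ s) * μ (ball (0 : E) (a k) \ ball 0 (a (k+1))) :=
            setLIntegral_const _ _
        _ ≤ ENNReal.ofReal (a (k+1) ^ s) * μ (ball (0 : E) (a k)) := by
            exact mul_le_mul_right (measure_mono diff_subset) _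
        _ = ENNReal.ofReal (a (k+1) ^ s) * (ENNReal.ofReal (a k ^ n) * μ (ball (0 : E) 1)) := by
            rw [Measure.addHaar_ball μ _ (ha_pos k).le]
        _ = ENNReal.ofReal (a (k+1) ^ s * a k ^ n) * μ (ball (0 : E) 1) := by
            rw [ENNReal.ofReal_mul (Real.rpow_nonneg (ha_pos (k+1)).le s), mul_assoc]
    have hpow : ∀ (x : ℝ), 0 ≤ x → ∀ (m : ℕ) (t : ℝ), (x ^ m) ^ t = (x ^ t) ^ m := by
      intro x hx m t
      rw [← Real.rpow_natCast x m, ← Real.rpow_mul hx, mul_comm, Real.rpow_mul hx,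
        Real.rpow_natCast]
    have hkey : ∀ k, a (k+1) ^ s * a k ^ n
        = (r ^ s * (1/2:ℝ) ^ s * r ^ n) * ((1/2:ℝ) ^ s * (1/2:ℝ) ^ n) ^ k := by
      intro k
      have e1 : a (k+1) ^ s = r ^ s * ((1/2:ℝ) ^ s) ^ (k+1) := by
        rw [ha]
        rw [Real.mul_rpow hr.le (by positivity), hpow _ (by norm_num)]
      have e2 : a k ^ n = r ^ n * (((1/2):ℝ) ^ n) ^ k := by
        rw [ha, mul_pow, ← pow_mul, mul_comm k n, pow_mul]
      rw [e1, e2]; ring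
    have hQlt : ENNReal.ofReal ((1/2:ℝ) ^ s * (1/2:ℝ) ^ n) < 1 := by
      rw [ENNReal.ofReal_lt_one]
      have : (1/2:ℝ) ^ s * (1/2:ℝ) ^ n = (1/2:ℝ) ^ (s + n) := by
        rw [Real.rpow_add (by norm_num : (0:ℝ) < 1/2), Real.rpow_natCast]
      rw [this]
      refine Real.rpow_lt_one (by norm_num) (by norm_num) ?_
      have : -(n : ℝ) < s := hs
      linarith
    calc ∫⁻ z in ball (0 : E) r, ENNReal.ofReal (‖z‖ ^ s) ∂μ
        ≤ ∫⁻ z in {(0 : E)} ∪ ⋃ k, (ball (0 : E) (a k) \ ball 0 (a (k+1))),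
            ENNReal.ofReal (‖z‖ ^ s) ∂μ := lintegral_mono_set hcover
      _ ≤ (∫⁻ z in {(0 : E)}, ENNReal.ofReal (‖z‖ ^ s) ∂μ)
          + ∫⁻ z in ⋃ k, (ball (0 : E) (a k) \ ball 0 (a (k+1))),
            ENNReal.ofReal (‖z‖ ^ s) ∂μ := lintegral_union_le _ _ _
      _ ≤ 0 + ∑' k, ∫⁻ z in ball (0 : E) (a k) \ ball 0 (a (k+1)),
            ENNReal.ofReal (‖z‖ ^ s) ∂μ := by
          refine add_le_add ?_ (lintegral_iUnion_le _ _)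
          rw [setLIntegral_measure_zero _ _ (measure_singleton _)]
      _ ≤ 0 + ∑' k, ENNReal.ofReal (a (k+1) ^ s * a k ^ n) * μ (ball (0 : E) 1) := by
          exact add_le_add le_rfl (ENNReal.tsum_le_tsum hterm)
      _ < ⊤ := by
          rw [zero_add]
          have : ∀ k, ENNReal.ofReal (a (k+1) ^ s * a k ^ n) * μ (ball (0 : E) 1)
              = (ENNReal.ofReal (r ^ s * (1/2:ℝ) ^ s * r ^ n) * μ (ball (0 : E) 1))
                * (ENNReal.ofReal ((1/2:ℝ) ^ s * (1/2:ℝ) ^ n)) ^ k := by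
            intro k
            rw [hkey k, ENNReal.ofReal_mul (by positivity), ENNReal.ofReal_pow (by positivity)]
            ring
          rw [tsum_congr this, ENNReal.tsum_mul_left, ENNReal.tsum_geometric]
          refine ENNReal.mul_lt_top
            (ENNReal.mul_lt_top ENNReal.ofReal_lt_top measure_ball_lt_top) ?_
          rw [ENNReal.inv_lt_top]
          exact tsub_pos_of_lt hQlt

/-- Finiteness of `∫_{B(0,r)ᶜ} ‖z‖^s` for `s < -dim`. -/
lemma lint_compl_ball_rpow_lt_top {s r : ℝ} (hs : s < -(Module.finrank ℝ E : ℝ)) (hr : 0 < r) :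
    (∫⁻ z in (Metric.ball (0 : E) r)ᶜ, ENNReal.ofReal (‖z‖ ^ s) ∂μ) < ⊤ := by
  have hn : (0:ℝ) ≤ (Module.finrank ℝ E : ℝ) := Nat.cast_nonneg _
  have hs0 : s < 0 := lt_of_lt_of_le hs (by linarith)
  set c : ℝ := 1 + 1/r with hc_def
  have hc : 0 < c := by positivity
  have hb : ∀ z : E, z ∈ (ball (0 : E) r)ᶜ → ‖z‖ ^ s ≤ c ^ (-s) * (1 + ‖z‖) ^ s := by
    intro z hz
    have hrz : r ≤ ‖z‖ := by
      have := hz; rw [mem_compl_iff, mem_ball_zero_iff, not_lt] at this; exact this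
    have hz0 : 0 < ‖z‖ := lt_of_lt_of_le hr hrz
    have h1 : (1 + ‖z‖) / c ≤ ‖z‖ := by
      rw [div_le_iff₀ hc]
      have hd : 1 ≤ ‖z‖ / r := (one_le_div hr).2 hrz
      have : ‖z‖ * c = ‖z‖ + ‖z‖ / r := by rw [hc_def]; field_simp
      rw [this]; linarith
    calc ‖z‖ ^ s ≤ ((1 + ‖z‖) / c) ^ s :=
          Real.rpow_le_rpow_of_nonpos (by positivity) h1 hs0.le
      _ = (1 + ‖z‖) ^ s / c ^ s := by
          rw [Real.div_rpow (by positivity : (0:ℝ) ≤ 1 + ‖z‖) hc.le]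
      _ = c ^ (-s) * (1 + ‖z‖) ^ s := by
          rw [Real.rpow_neg hc.le, div_eq_mul_inv, mul_comm]
  calc ∫⁻ z in (ball (0 : E) r)ᶜ, ENNReal.ofReal (‖z‖ ^ s) ∂μ
      ≤ ∫⁻ z in (ball (0 : E) r)ᶜ, ENNReal.ofReal (c ^ (-s) * (1 + ‖z‖) ^ s) ∂μ :=
        setLIntegral_mono (by fun_prop) fun z hz => ENNReal.ofReal_le_ofReal (hb z hz)
    _ ≤ ∫⁻ z, ENNReal.ofReal (c ^ (-s) * (1 + ‖z‖) ^ s) ∂μ := setLIntegral_le_lintegral _ _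
    _ = ENNReal.ofReal (c ^ (-s)) * ∫⁻ z, ENNReal.ofReal ((1 + ‖z‖) ^ s) ∂μ := by
        simp_rw [ENNReal.ofReal_mul (by positivity : (0:ℝ) ≤ c ^ (-s))]
        exact lintegral_const_mul' _ _ ENNReal.ofReal_ne_top
    _ < ⊤ := by
        refine ENNReal.mul_lt_top ENNReal.ofReal_lt_top ?_
        have h := finite_integral_one_add_norm (μ := μ) (r := -s) (by linarith)
        simpa [neg_neg] using h

/-- The key kernel bound: for a center `c` in the annulus `ε ≤ ‖c‖ ≤ R`, the integral
`∫ min(L‖c-z‖, 2M)^p / ‖c-z‖^d * ‖z‖^{-γ} dz` is bounded by a uniform finite constant. -/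
lemma key_kernel_bound (L M p ε R γ : ℝ) (hL : 0 ≤ L) (hM : 0 ≤ M) (hp : 0 < p)
    (hε : 0 < ε) (hεR : ε ≤ R) (hγ : 0 < γ) (hγ' : γ < (Module.finrank ℝ E : ℝ)) :
    ∃ C : ℝ≥0∞, C ≠ ⊤ ∧ ∀ c : E, ε ≤ ‖c‖ → ‖c‖ ≤ R →
      (∫⁻ z, ENNReal.ofReal (min (L * ‖c - z‖) (2*M) ^ p
        / ‖c - z‖ ^ (Module.finrank ℝ E : ℝ) * ‖z‖ ^ (-γ)) ∂μ) ≤ C := by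
  set dd : ℝ := (Module.finrank ℝ E : ℝ) with hdd
  have hdd0 : 0 < dd := lt_trans hγ hγ'
  have hR : 0 < R := lt_of_lt_of_le hε hεR
  set c1 : ℝ := (2*M) ^ p / (ε/2) ^ dd with hc1_def
  set c2 : ℝ := L ^ p * (ε/2) ^ (-γ) with hc2_def
  set c3 : ℝ := (2*M) ^ p * 2 ^ dd with hc3_def
  have hc1 : 0 ≤ c1 := by positivity
  have hc2 : 0 ≤ c2 := by positivity
  have hc3 : 0 ≤ c3 := by positivity
  have I1 : (∫⁻ z in ball (0 : E) (ε/2), ENNReal.ofReal (‖z‖ ^ (-γ)) ∂μ) < ⊤ :=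
    lint_ball_rpow_lt_top μ (by rw [← hdd]; linarith) (by positivity)
  have I2 : (∫⁻ w in ball (0 : E) (3*R+1), ENNReal.ofReal (‖w‖ ^ (p - dd)) ∂μ) < ⊤ :=
    lint_ball_rpow_lt_top μ (by rw [← hdd]; linarith) (by positivity)
  have I3 : (∫⁻ z in (ball (0 : E) R)ᶜ, ENNReal.ofReal (‖z‖ ^ (-dd - γ)) ∂μ) < ⊤ :=
    lint_compl_ball_rpow_lt_top μ (by rw [← hdd]; linarith) hR
  refine ⟨ENNReal.ofReal c1 * (∫⁻ z in ball (0 : E) (ε/2), ENNReal.ofReal (‖z‖ ^ (-γ)) ∂μ)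
    + ENNReal.ofReal c2 * (∫⁻ w in ball (0 : E) (3*R+1), ENNReal.ofReal (‖w‖ ^ (p - dd)) ∂μ)
    + ENNReal.ofReal c3 * (∫⁻ z in (ball (0 : E) R)ᶜ, ENNReal.ofReal (‖z‖ ^ (-dd - γ)) ∂μ),
    ?_, ?_⟩
  · refine (ENNReal.add_lt_top.2 ⟨ENNReal.add_lt_top.2 ⟨?_, ?_⟩, ?_⟩).ne
    · exact ENNReal.mul_lt_top ENNReal.ofReal_lt_top I1
    · exact ENNReal.mul_lt_top ENNReal.ofReal_lt_top I2
    · exact ENNReal.mul_lt_top ENNReal.ofReal_lt_top I3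
  intro c hcε hcR
  set G1 : E → ℝ≥0∞ :=
    (ball (0 : E) (ε/2)).indicator (fun z => ENNReal.ofReal (c1 * ‖z‖ ^ (-γ))) with hG1_def
  set G2 : E → ℝ≥0∞ := fun z =>
    (closedBall (0 : E) (3*R)).indicator
      (fun w => ENNReal.ofReal (c2 * ‖w‖ ^ (p - dd))) (c - z) with hG2_def
  set G3 : E → ℝ≥0∞ :=
    ((closedBall (0 : E) (2*R))ᶜ).indicator
      (fun z => ENNReal.ofReal (c3 * ‖z‖ ^ (-dd - γ))) with hG3_def
  have hptwise : ∀ z : E, ENNReal.ofReal (min (L * ‖c - z‖) (2*M) ^ p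
      / ‖c - z‖ ^ dd * ‖z‖ ^ (-γ)) ≤ G1 z + G2 z + G3 z := by
    intro z
    have hw0 : 0 ≤ ‖c - z‖ := norm_nonneg _
    have hnum0 : 0 ≤ min (L * ‖c - z‖) (2*M) := le_min (by positivity) (by positivity)
    have hnum : min (L * ‖c - z‖) (2*M) ^ p ≤ (2*M) ^ p :=
      Real.rpow_le_rpow hnum0 (min_le_right _ _) hp.le
    rcases lt_or_ge ‖z‖ (ε/2) with h1 | h1
    · have hwε : ε/2 ≤ ‖c - z‖ := by
        have h := norm_sub_norm_le c z
        linarith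
      have hreal : min (L * ‖c - z‖) (2*M) ^ p / ‖c - z‖ ^ dd * ‖z‖ ^ (-γ)
          ≤ c1 * ‖z‖ ^ (-γ) := by
        refine mul_le_mul_of_nonneg_right ?_ (by positivity)
        rw [hc1_def]
        refine div_le_div₀ (by positivity) hnum (by positivity) ?_
        exact Real.rpow_le_rpow (by positivity) hwε hdd0.le
      have hle : ENNReal.ofReal (min (L * ‖c - z‖) (2*M) ^ p / ‖c - z‖ ^ dd * ‖z‖ ^ (-γ))
          ≤ G1 z := by
        rw [hG1_def, indicator_of_mem (mem_ball_zero_iff.2 h1)]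
        exact ENNReal.ofReal_le_ofReal hreal
      exact le_add_right (le_add_right hle)
    rcases le_or_gt ‖z‖ (2*R) with h2 | h2
    · have hmem : c - z ∈ closedBall (0 : E) (3*R) := by
        rw [mem_closedBall_zero_iff]
        calc ‖c - z‖ ≤ ‖c‖ + ‖z‖ := norm_sub_le _ _
          _ ≤ 3*R := by linarith
      have hzb : ‖z‖ ^ (-γ) ≤ (ε/2) ^ (-γ) :=
        Real.rpow_le_rpow_of_nonpos (by positivity) h1 (by linarith)
      have hreal : min (L * ‖c - z‖) (2*M) ^ p / ‖c - z‖ ^ dd * ‖z‖ ^ (-γ)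
          ≤ c2 * ‖c - z‖ ^ (p - dd) := by
        rcases eq_or_lt_of_le hw0 with hw | hw
        · rw [← hw]
          simp only [Real.zero_rpow hdd0.ne', div_zero, zero_mul]
          positivity
        · have h3 : min (L * ‖c - z‖) (2*M) ^ p ≤ L ^ p * ‖c - z‖ ^ p := by
            calc min (L * ‖c - z‖) (2*M) ^ p ≤ (L * ‖c - z‖) ^ p :=
                  Real.rpow_le_rpow hnum0 (min_le_left _ _) hp.le
              _ = L ^ p * ‖c - z‖ ^ p := Real.mul_rpow hL hw0
          have hA : min (L * ‖c - z‖) (2*M) ^ p / ‖c - z‖ ^ dd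
              ≤ L ^ p * ‖c - z‖ ^ (p - dd) := by
            have hstep : min (L * ‖c - z‖) (2*M) ^ p / ‖c - z‖ ^ dd
                ≤ (L ^ p * ‖c - z‖ ^ p) / ‖c - z‖ ^ dd := by gcongr
            refine hstep.trans (le_of_eq ?_)
            rw [Real.rpow_sub hw]
            ring
          calc min (L * ‖c - z‖) (2*M) ^ p / ‖c - z‖ ^ dd * ‖z‖ ^ (-γ)
              ≤ (L ^ p * ‖c - z‖ ^ (p - dd)) * ((ε/2) ^ (-γ)) :=
                mul_le_mul hA hzb (by positivity) (by positivity)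
            _ = c2 * ‖c - z‖ ^ (p - dd) := by rw [hc2_def]; ring
      have hle : ENNReal.ofReal (min (L * ‖c - z‖) (2*M) ^ p / ‖c - z‖ ^ dd * ‖z‖ ^ (-γ))
          ≤ G2 z := by
        rw [hG2_def]
        simp only [indicator_of_mem hmem]
        exact ENNReal.ofReal_le_ofReal hreal
      exact le_add_right (le_add_left hle)
    · have hz0 : 0 < ‖z‖ := by linarith
      have hwz : ‖z‖/2 ≤ ‖c - z‖ := by
        have h := norm_sub_norm_le z c
        rw [norm_sub_rev z c] at h
        linarith
      have hreal : min (L * ‖c - z‖) (2*M) ^ p / ‖c - z‖ ^ dd * ‖z‖ ^ (-γ)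
          ≤ c3 * ‖z‖ ^ (-dd - γ) := by
        have hden : (‖z‖/2) ^ dd ≤ ‖c - z‖ ^ dd :=
          Real.rpow_le_rpow (by positivity) hwz hdd0.le
        have hA : min (L * ‖c - z‖) (2*M) ^ p / ‖c - z‖ ^ dd
            ≤ (2*M) ^ p / (‖z‖/2) ^ dd :=
          div_le_div₀ (by positivity) hnum (by positivity) hden
        have hB : (2*M) ^ p / (‖z‖/2) ^ dd = c3 * ‖z‖ ^ (-dd) := by
          rw [Real.div_rpow hz0.le (by norm_num : (0:ℝ) ≤ 2), Real.rpow_neg hz0.le, hc3_def]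
          field_simp
        have hC : ‖z‖ ^ (-dd) * ‖z‖ ^ (-γ) = ‖z‖ ^ (-dd - γ) := by
          rw [← Real.rpow_add hz0]; ring_nf
        calc min (L * ‖c - z‖) (2*M) ^ p / ‖c - z‖ ^ dd * ‖z‖ ^ (-γ)
            ≤ ((2*M) ^ p / (‖z‖/2) ^ dd) * ‖z‖ ^ (-γ) :=
              mul_le_mul_of_nonneg_right hA (by positivity)
          _ = c3 * (‖z‖ ^ (-dd) * ‖z‖ ^ (-γ)) := by rw [hB]; ring
          _ = c3 * ‖z‖ ^ (-dd - γ) := by rw [hC]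
      have hmem : z ∈ (closedBall (0 : E) (2*R))ᶜ := by
        rw [mem_compl_iff, mem_closedBall_zero_iff]
        push_neg
        exact h2
      have hle : ENNReal.ofReal (min (L * ‖c - z‖) (2*M) ^ p / ‖c - z‖ ^ dd * ‖z‖ ^ (-γ))
          ≤ G3 z := by
        rw [hG3_def, indicator_of_mem hmem]
        exact ENNReal.ofReal_le_ofReal hreal
      exact le_add_left hle
  have hG2meas : Measurable G2 := by
    rw [hG2_def]
    refine Measurable.indicator ?_ measurableSet_closedBall |>.comp (by fun_prop)
    fun_prop
  have hG3meas : Measurable G3 := by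
    rw [hG3_def]
    exact Measurable.indicator (by fun_prop) measurableSet_closedBall.compl
  calc ∫⁻ z, ENNReal.ofReal (min (L * ‖c - z‖) (2*M) ^ p
        / ‖c - z‖ ^ dd * ‖z‖ ^ (-γ)) ∂μ
      ≤ ∫⁻ z, (G1 z + G2 z + G3 z) ∂μ := lintegral_mono hptwise
    _ = (∫⁻ z, (G1 z + G2 z) ∂μ) + ∫⁻ z, G3 z ∂μ := lintegral_add_right _ hG3meas
    _ = ((∫⁻ z, G1 z ∂μ) + ∫⁻ z, G2 z ∂μ) + ∫⁻ z, G3 z ∂μ := by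
        rw [lintegral_add_right _ hG2meas]
    _ ≤ ENNReal.ofReal c1 * (∫⁻ z in ball (0 : E) (ε/2), ENNReal.ofReal (‖z‖ ^ (-γ)) ∂μ)
        + ENNReal.ofReal c2 * (∫⁻ w in ball (0 : E) (3*R+1),
            ENNReal.ofReal (‖w‖ ^ (p - dd)) ∂μ)
        + ENNReal.ofReal c3 * (∫⁻ z in (ball (0 : E) R)ᶜ,
            ENNReal.ofReal (‖z‖ ^ (-dd - γ)) ∂μ) := by
        refine add_le_add (add_le_add ?_ ?_) ?_
        · rw [hG1_def, lintegral_indicator measurableSet_ball]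
          simp_rw [ENNReal.ofReal_mul hc1]
          exact le_of_eq (lintegral_const_mul' _ _ ENNReal.ofReal_ne_top)
        · have hswap : ∫⁻ z, G2 z ∂μ = ∫⁻ w, (closedBall (0 : E) (3*R)).indicator
              (fun w => ENNReal.ofReal (c2 * ‖w‖ ^ (p - dd))) w ∂μ := by
            rw [hG2_def]
            exact (Measure.measurePreserving_sub_left μ c).lintegral_comp
              (Measurable.indicator (by fun_prop) measurableSet_closedBall)
          rw [hswap, lintegral_indicator measurableSet_closedBall]
          calc ∫⁻ w in closedBall (0 : E) (3*R), ENNReal.ofReal (c2 * ‖w‖ ^ (p - dd)) ∂μ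
              ≤ ∫⁻ w in ball (0 : E) (3*R+1), ENNReal.ofReal (c2 * ‖w‖ ^ (p - dd)) ∂μ :=
                lintegral_mono_set (closedBall_subset_ball (by linarith))
            _ = ENNReal.ofReal c2 * ∫⁻ w in ball (0 : E) (3*R+1),
                  ENNReal.ofReal (‖w‖ ^ (p - dd)) ∂μ := by
                simp_rw [ENNReal.ofReal_mul hc2]
                exact lintegral_const_mul' _ _ ENNReal.ofReal_ne_top
        · rw [hG3_def, lintegral_indicator measurableSet_closedBall.compl]
          calc ∫⁻ z in (closedBall (0 : E) (2*R))ᶜ,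
                ENNReal.ofReal (c3 * ‖z‖ ^ (-dd - γ)) ∂μ
              ≤ ∫⁻ z in (ball (0 : E) R)ᶜ, ENNReal.ofReal (c3 * ‖z‖ ^ (-dd - γ)) ∂μ := by
                refine lintegral_mono_set (compl_subset_compl.2 ?_)
                exact ball_subset_closedBall.trans (closedBall_subset_closedBall (by linarith))
            _ = ENNReal.ofReal c3 * ∫⁻ z in (ball (0 : E) R)ᶜ,
                  ENNReal.ofReal (‖z‖ ^ (-dd - γ)) ∂μ := by
                simp_rw [ENNReal.ofReal_mul hc3]
                exact lintegral_const_mul' _ _ ENNReal.ofReal_ne_top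

end Aux

/-- Finiteness of the weighted Gagliardo seminorm `[f]_{W^{0,p}_{α,β}(ℝ^d)}^p` for
`f ∈ C_c¹` with support avoiding the origin and `0 < α, β < d`. -/
theorem gagliardo_zero_order_finite
    (d : ℕ) (hd : 1 ≤ d) (p : ℝ) (hp : 1 ≤ p)
    (f : EuclideanSpace ℝ (Fin d) → ℝ) (hf : ContDiff ℝ 1 f)
    (hfc : HasCompactSupport f) (hsupp : (0 : EuclideanSpace ℝ (Fin d)) ∉ tsupport f)
    (α β : ℝ) (hα : 0 < α) (hα' : α < d) (hβ : 0 < β) (hβ' : β < d) :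
    (∫⁻ x : EuclideanSpace ℝ (Fin d), ∫⁻ y : EuclideanSpace ℝ (Fin d),
      ENNReal.ofReal
        (|f x - f y| ^ p / ‖x - y‖ ^ (d : ℝ) * ‖x‖ ^ (-α) * ‖y‖ ^ (-β))) ≠ ⊤ := by
  have hp0 : (0:ℝ) < p := lt_of_lt_of_le one_pos hp
  haveI : Nontrivial (EuclideanSpace ℝ (Fin d)) :=
    Module.nontrivial_of_finrank_pos (R := ℝ) (by rw [finrank_euclideanSpace_fin]; exact hd)
  have hdE : ((Module.finrank ℝ (EuclideanSpace ℝ (Fin d)) : ℕ) : ℝ) = (d : ℝ) := by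
    rw [finrank_euclideanSpace_fin]
  obtain ⟨L0, hL0⟩ := ContDiff.lipschitzWith_of_hasCompactSupport hfc hf one_ne_zero
  obtain ⟨M, hM⟩ := hf.continuous.bounded_above_of_compact_support hfc
  have hM0 : (0:ℝ) ≤ M := le_trans (norm_nonneg _) (hM 0)
  have hdiff : ∀ x y : EuclideanSpace ℝ (Fin d),
      |f x - f y| ≤ min ((L0:ℝ) * ‖x - y‖) (2*M) := by
    intro x y
    refine le_min ?_ ?_
    · have h := hL0.dist_le_mul x y
      rwa [Real.dist_eq, dist_eq_norm] at h
    · calc |f x - f y| = ‖f x - f y‖ := (Real.norm_eq_abs _).symm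
        _ ≤ ‖f x‖ + ‖f y‖ := norm_sub_le _ _
        _ ≤ 2*M := by have h1 := hM x; have h2 := hM y; linarith
  obtain ⟨ε, hε0, hεball⟩ := Metric.isOpen_iff.1 (isClosed_tsupport f).isOpen_compl 0 hsupp
  have hεK : ∀ x ∈ tsupport f, ε ≤ ‖x‖ := by
    intro x hx
    by_contra h
    push_neg at h
    exact hεball (mem_ball_zero_iff.2 h) hx
  obtain ⟨R0, hR0⟩ := hfc.isBounded.subset_closedBall 0
  set R : ℝ := max R0 ε with hR_def
  have hεR : ε ≤ R := le_max_right _ _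
  have hKR : ∀ x ∈ tsupport f, ‖x‖ ≤ R := fun x hx =>
    le_trans (mem_closedBall_zero_iff.1 (hR0 hx)) (le_max_left _ _)
  obtain ⟨Cβ, hCβtop, hCβ⟩ := key_kernel_bound (E := EuclideanSpace ℝ (Fin d))
    volume (L0:ℝ) M p ε R β L0.coe_nonneg hM0 hp0 hε0 hεR hβ (by rw [hdE]; exact hβ')
  obtain ⟨Cα, hCαtop, hCα⟩ := key_kernel_bound (E := EuclideanSpace ℝ (Fin d))
    volume (L0:ℝ) M p ε R α L0.coe_nonneg hM0 hp0 hε0 hεR hα (by rw [hdE]; exact hα')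
  simp only [finrank_euclideanSpace_fin] at hCβ hCα
  set K := tsupport f with hK_def
  have hKm : MeasurableSet K := (isClosed_tsupport f).measurableSet
  set T1 : EuclideanSpace ℝ (Fin d) → EuclideanSpace ℝ (Fin d) → ℝ≥0∞ := fun x y =>
    K.indicator (fun _ => (1:ℝ≥0∞)) x *
      ENNReal.ofReal (ε ^ (-α) *
        (min ((L0:ℝ) * ‖x - y‖) (2*M) ^ p / ‖x - y‖ ^ (d:ℝ) * ‖y‖ ^ (-β))) with hT1
  set T2 : EuclideanSpace ℝ (Fin d) → EuclideanSpace ℝ (Fin d) → ℝ≥0∞ := fun x y =>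
    K.indicator (fun _ => (1:ℝ≥0∞)) y *
      ENNReal.ofReal (ε ^ (-β) *
        (min ((L0:ℝ) * ‖x - y‖) (2*M) ^ p / ‖x - y‖ ^ (d:ℝ) * ‖x‖ ^ (-α))) with hT2
  have hpt : ∀ x y, ENNReal.ofReal
      (|f x - f y| ^ p / ‖x - y‖ ^ (d:ℝ) * ‖x‖ ^ (-α) * ‖y‖ ^ (-β))
      ≤ T1 x y + T2 x y := by
    intro x y
    have hnum0 : 0 ≤ min ((L0:ℝ) * ‖x - y‖) (2*M) := le_min (by positivity) (by positivity)
    have hq : |f x - f y| ^ p / ‖x - y‖ ^ (d:ℝ)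
        ≤ min ((L0:ℝ) * ‖x - y‖) (2*M) ^ p / ‖x - y‖ ^ (d:ℝ) := by
      rcases eq_or_ne x y with rfl | hxy
      · simp [sub_self, Real.zero_rpow hp0.ne']
        positivity
      · have hxy0 : 0 < ‖x - y‖ := by
          rw [norm_pos_iff, sub_ne_zero]; exact hxy
        have hb := Real.rpow_le_rpow (abs_nonneg _) (hdiff x y) hp0.le
        exact div_le_div₀ (Real.rpow_nonneg hnum0 _) hb (by positivity) le_rfl
    by_cases hx : x ∈ K
    · have e3 : ‖x‖ ^ (-α) ≤ ε ^ (-α) :=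
        Real.rpow_le_rpow_of_nonpos hε0 (hεK x hx) (by linarith)
      have hreal : |f x - f y| ^ p / ‖x - y‖ ^ (d:ℝ) * ‖x‖ ^ (-α) * ‖y‖ ^ (-β)
          ≤ ε ^ (-α) *
            (min ((L0:ℝ) * ‖x - y‖) (2*M) ^ p / ‖x - y‖ ^ (d:ℝ) * ‖y‖ ^ (-β)) := by
        calc |f x - f y| ^ p / ‖x - y‖ ^ (d:ℝ) * ‖x‖ ^ (-α) * ‖y‖ ^ (-β)
            ≤ (min ((L0:ℝ) * ‖x - y‖) (2*M) ^ p / ‖x - y‖ ^ (d:ℝ)) * ε ^ (-α)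
                * ‖y‖ ^ (-β) := by
              refine mul_le_mul_of_nonneg_right ?_ (by positivity)
              exact mul_le_mul hq e3 (by positivity) (by positivity)
          _ = ε ^ (-α) *
              (min ((L0:ℝ) * ‖x - y‖) (2*M) ^ p / ‖x - y‖ ^ (d:ℝ) * ‖y‖ ^ (-β)) := by ring
      have hle : ENNReal.ofReal
          (|f x - f y| ^ p / ‖x - y‖ ^ (d:ℝ) * ‖x‖ ^ (-α) * ‖y‖ ^ (-β)) ≤ T1 x y := by
        rw [hT1]
        simp only [indicator_of_mem hx, one_mul]
        exact ENNReal.ofReal_le_ofReal hreal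
      exact le_trans hle le_self_add
    by_cases hy : y ∈ K
    · have e3 : ‖y‖ ^ (-β) ≤ ε ^ (-β) :=
        Real.rpow_le_rpow_of_nonpos hε0 (hεK y hy) (by linarith)
      have hreal : |f x - f y| ^ p / ‖x - y‖ ^ (d:ℝ) * ‖x‖ ^ (-α) * ‖y‖ ^ (-β)
          ≤ ε ^ (-β) *
            (min ((L0:ℝ) * ‖x - y‖) (2*M) ^ p / ‖x - y‖ ^ (d:ℝ) * ‖x‖ ^ (-α)) := by
        calc |f x - f y| ^ p / ‖x - y‖ ^ (d:ℝ) * ‖x‖ ^ (-α) * ‖y‖ ^ (-β)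
            ≤ (min ((L0:ℝ) * ‖x - y‖) (2*M) ^ p / ‖x - y‖ ^ (d:ℝ)) * ‖x‖ ^ (-α)
                * ε ^ (-β) := by
              refine mul_le_mul ?_ e3 (by positivity) (by positivity)
              exact mul_le_mul_of_nonneg_right hq (by positivity)
          _ = ε ^ (-β) *
              (min ((L0:ℝ) * ‖x - y‖) (2*M) ^ p / ‖x - y‖ ^ (d:ℝ) * ‖x‖ ^ (-α)) := by ring
      have hle : ENNReal.ofReal
          (|f x - f y| ^ p / ‖x - y‖ ^ (d:ℝ) * ‖x‖ ^ (-α) * ‖y‖ ^ (-β)) ≤ T2 x y := by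
        rw [hT2]
        simp only [indicator_of_mem hy, one_mul]
        exact ENNReal.ofReal_le_ofReal hreal
      exact le_trans hle le_add_self
    · have hfx : f x = 0 := image_eq_zero_of_notMem_tsupport hx
      have hfy : f y = 0 := image_eq_zero_of_notMem_tsupport hy
      simp [hfx, hfy, Real.zero_rpow hp0.ne']
  have hmeasT1 : Measurable (Function.uncurry T1) := by
    rw [hT1]
    refine Measurable.mul ?_ ?_
    · exact (measurable_const.indicator hKm).comp measurable_fst
    · fun_prop
  have hmeasT2 : Measurable (Function.uncurry T2) := by
    rw [hT2]
    refine Measurable.mul ?_ ?_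
    · exact (measurable_const.indicator hKm).comp measurable_snd
    · fun_prop
  rw [← lt_top_iff_ne_top]
  calc ∫⁻ x : EuclideanSpace ℝ (Fin d), ∫⁻ y : EuclideanSpace ℝ (Fin d),
        ENNReal.ofReal (|f x - f y| ^ p / ‖x - y‖ ^ (d:ℝ) * ‖x‖ ^ (-α) * ‖y‖ ^ (-β))
      ≤ ∫⁻ x, ∫⁻ y, (T1 x y + T2 x y) :=
        lintegral_mono fun x => lintegral_mono fun y => hpt x y
    _ = (∫⁻ x, ∫⁻ y, T1 x y) + ∫⁻ x, ∫⁻ y, T2 x y := by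
        have e1 : ∀ x, ∫⁻ y, (T1 x y + T2 x y) = (∫⁻ y, T1 x y) + ∫⁻ y, T2 x y := by
          intro x
          refine lintegral_add_left ?_ _
          rw [hT1]
          exact measurable_const.mul (by fun_prop)
        simp_rw [e1]
        exact lintegral_add_left (hmeasT1.lintegral_prod_right) _
    _ < ⊤ := by
        refine ENNReal.add_lt_top.2 ⟨?_, ?_⟩
        · have hA : ∀ x, (∫⁻ y, T1 x y)
              ≤ K.indicator (fun _ => ENNReal.ofReal (ε ^ (-α)) * Cβ) x := by
            intro x
            by_cases hx : x ∈ K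
            · rw [indicator_of_mem hx, hT1]
              simp only [indicator_of_mem hx, one_mul]
              simp_rw [ENNReal.ofReal_mul (by positivity : (0:ℝ) ≤ ε ^ (-α))]
              rw [lintegral_const_mul' _ _ ENNReal.ofReal_ne_top]
              exact mul_le_mul_right (hCβ x (hεK x hx) (hKR x hx)) _
            · rw [indicator_of_notMem hx, hT1]
              simp only [indicator_of_notMem hx, zero_mul, lintegral_zero]
              exact le_rfl
          calc ∫⁻ x, ∫⁻ y, T1 x y
              ≤ ∫⁻ x, K.indicator (fun _ => ENNReal.ofReal (ε ^ (-α)) * Cβ) x :=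
                lintegral_mono hA
            _ = ENNReal.ofReal (ε ^ (-α)) * Cβ * volume K := lintegral_indicator_const hKm _
            _ < ⊤ := by
                refine ENNReal.mul_lt_top (ENNReal.mul_lt_top ENNReal.ofReal_lt_top ?_) ?_
                · exact lt_top_iff_ne_top.2 hCβtop
                · exact IsCompact.measure_lt_top hfc
        · have hswap : (∫⁻ x, ∫⁻ y, T2 x y) = ∫⁻ y, ∫⁻ x, T2 x y :=
            lintegral_lintegral_swap hmeasT2.aemeasurable
          rw [hswap]
          have hA : ∀ y, (∫⁻ x, T2 x y)
              ≤ K.indicator (fun _ => ENNReal.ofReal (ε ^ (-β)) * Cα) y := by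
            intro y
            by_cases hy : y ∈ K
            · rw [indicator_of_mem hy, hT2]
              simp only [indicator_of_mem hy, one_mul]
              simp_rw [ENNReal.ofReal_mul (by positivity : (0:ℝ) ≤ ε ^ (-β))]
              rw [lintegral_const_mul' _ _ ENNReal.ofReal_ne_top]
              refine mul_le_mul_right ?_ _
              refine le_trans (le_of_eq (lintegral_congr fun x => ?_))
                (hCα y (hεK y hy) (hKR y hy))
              rw [norm_sub_rev]
            · rw [indicator_of_notMem hy, hT2]
              simp only [indicator_of_notMem hy, zero_mul, lintegral_zero]
              exact le_rfl
          calc ∫⁻ y, ∫⁻ x, T2 x y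
              ≤ ∫⁻ y, K.indicator (fun _ => ENNReal.ofReal (ε ^ (-β)) * Cα) y :=
                lintegral_mono hA
            _ = ENNReal.ofReal (ε ^ (-β)) * Cα * volume K := lintegral_indicator_const hKm _
            _ < ⊤ := by
                refine ENNReal.mul_lt_top (ENNReal.mul_lt_top ENNReal.ofReal_lt_top ?_) ?_
                · exact lt_top_iff_ne_top.2 hCαtop
                · exact IsCompact.measure_lt_top hfc
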